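/- For every integer d ≥ 2, a polynomial function P on 𝔤_d* is Ad*(G_d)-invariant (equivalently, P(ℓ + ad*_X ℓ) = P(ℓ) for all X ∈ 𝔤_d and ℓ ∈ 𝔤_d*) if and only if P belongs to the ℝ-subalgebra generated by the polynomials z_1, …, z_d, z_1 y_2 − z_2 y_1, z_1 y_4 − z_3 y_3, …, z_1 y_{2d−2} − z_{d−1} y_{2d−3}, and z_1 y_{2d} − (z_2 + ⋯ + z_d) y_{2d−1}, where z_i(ℓ) = ℓ(Z_i) and y_j(ℓ) = ℓ(Y_j) are the coordinate functions with respect to the dual basis. -/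

import Mathlib

/-- The coadjoint action of the Lie algebra: `(coad X f) W = f ⁅W, X⁆`. -/
def coad {L : Type*} [LieRing L] [LieAlgebra ℝ L] (X : L) (f : Module.Dual ℝ L) :
    Module.Dual ℝ L where
  toFun W := f ⁅W, X⁆
  map_add' a b := by simp [add_lie]
  map_smul' c a := by simp [smul_lie]

/-- The set `{ad*_X ℓ : X ∈ 𝔤, ℓ ∈ 𝔤*}` of all coadjoint tangent vectors. -/
def adStar (L : Type*) [LieRing L] [LieAlgebra ℝ L] : Set (Module.Dual ℝ L) :=
  {g | ∃ (X : L) (ℓ : Module.Dual ℝ L), g = coad X ℓ}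

/-- Coordinates of a linear functional with respect to the dual basis of `B`;
this identifies `𝔤*` with `ι → ℝ`, carrying the canonical topology. -/
noncomputable def coords {ι : Type*} {L : Type*} [LieRing L] [LieAlgebra ℝ L]
    (B : Module.Basis ι ℝ L) (f : Module.Dual ℝ L) : ι → ℝ := fun a => f (B a)

/-- The cortex `Cor(𝔤*)`: the closure (in the canonical topology of the
finite-dimensional space `𝔤*`, transported to coordinates via the dual basis)
of the set `{ad*_X ℓ : X ∈ 𝔤, ℓ ∈ 𝔤*}`. -/
def corSet {ι : Type*} {L : Type*} [LieRing L] [LieAlgebra ℝ L] (B : Module.Basis ι ℝ L) :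
    Set (Module.Dual ℝ L) :=
  {f | coords B f ∈ closure (coords B '' adStar L)}

/-- Index type for the basis of `𝔤_d`: first component indexes `Z_1,…,Z_d`, the second
the odd `Y`'s `Y_1, Y_3, …, Y_{2d-1}`, the third the even `Y`'s `Y_2, Y_4, …, Y_{2d}`,
and the fourth `X_1,…,X_d`. -/
abbrev Idx (d : ℕ) : Type := Fin d ⊕ (Fin d ⊕ (Fin d ⊕ Fin d))

/-- Index of `Z_{i+1}`. -/
def zI {d : ℕ} (i : Fin d) : Idx d := Sum.inl i
/-- Index of `Y_{2i+1}` (odd-indexed `Y`). -/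
def yoI {d : ℕ} (i : Fin d) : Idx d := Sum.inr (Sum.inl i)
/-- Index of `Y_{2i+2}` (even-indexed `Y`). -/
def yeI {d : ℕ} (i : Fin d) : Idx d := Sum.inr (Sum.inr (Sum.inl i))
/-- Index of `X_{i+1}`. -/
def xI {d : ℕ} (i : Fin d) : Idx d := Sum.inr (Sum.inr (Sum.inr i))

/-- Value of `⁅X_{i+1}, Y_{2i+2}⁆`: `Z_{i+2}` if `i + 1 < d`, and `Z_2 + ⋯ + Z_d`
if `i + 1 = d`. -/
def gdW {d : ℕ} (hd : 2 ≤ d) {V : Type*} [AddCommGroup V] (B : Idx d → V) (i : Fin d) : V :=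
  if h : (i : ℕ) < d - 1 then B (zI ⟨(i : ℕ) + 1, by omega⟩)
  else ∑ m ∈ Finset.univ.filter (fun m : Fin d => 0 < (m : ℕ)), B (zI m)

/-- The bracket `⁅B a, B b⁆` of two basis vectors of `𝔤_d`, given by the structure
constants: `⁅X_i, Y_{2i-1}⁆ = Z_1` for `i = 1,…,d`, `⁅X_k, Y_{2k}⁆ = Z_{k+1}` for
`k = 1,…,d-1`, `⁅X_d, Y_{2d}⁆ = Z_2 + ⋯ + Z_d`, all other brackets of basis
vectors being zero (up to antisymmetry). -/
def gdBr {d : ℕ} (hd : 2 ≤ d) {V : Type*} [AddCommGroup V] (B : Idx d → V) :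
    Idx d → Idx d → V
  | Sum.inr (Sum.inr (Sum.inr i)), Sum.inr (Sum.inl j) =>
      if i = j then B (zI ⟨0, by omega⟩) else 0
  | Sum.inr (Sum.inl j), Sum.inr (Sum.inr (Sum.inr i)) =>
      if i = j then -(B (zI ⟨0, by omega⟩)) else 0
  | Sum.inr (Sum.inr (Sum.inr i)), Sum.inr (Sum.inr (Sum.inl j)) =>
      if i = j then gdW hd B i else 0
  | Sum.inr (Sum.inr (Sum.inl j)), Sum.inr (Sum.inr (Sum.inr i)) =>
      if i = j then -(gdW hd B i) else 0
  | _, _ => 0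

/-- The homogeneous polynomial `Q_d` of degree `d`, evaluated at the odd coordinates
`ηo` (`ηo i = η_{2i+1}`) and the even coordinates `ηe` (`ηe i = η_{2i+2}`):
`Q_d = η_{2d-1}·Σ_{i=1}^{d-1}(η_{2i}·∏_{j=1, j≠i}^{d-1} η_{2j-1})
      − η_{2d}·∏_{j=1}^{d-1} η_{2j-1}`. -/
def Qd (d : ℕ) (hd : 2 ≤ d) (ηo ηe : Fin d → ℝ) : ℝ :=
  ηo ⟨d - 1, by omega⟩ *
      (∑ i ∈ Finset.univ.filter (fun i : Fin d => (i : ℕ) < d - 1),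
        ηe i * ∏ j ∈ Finset.univ.filter (fun j : Fin d => (j : ℕ) < d - 1 ∧ j ≠ i), ηo j)
    - ηe ⟨d - 1, by omega⟩ *
        ∏ j ∈ Finset.univ.filter (fun j : Fin d => (j : ℕ) < d - 1), ηo j

open MvPolynomial
namespace InvAux
variable {d : ℕ}




theorem my_aeval_eq_eval {σ : Type*} (x : σ → ℝ) (p : MvPolynomial σ ℝ) :
    aeval x p = eval x p := by
  rw [← coe_aeval_eq_eval]; rfl

theorem my_eval_aeval {σ τ : Type*} (x : τ → ℝ) (g : σ → MvPolynomial τ ℝ) (p : MvPolynomial σ ℝ) :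
    eval x (aeval g p) = eval (fun i => eval x (g i)) p := by
  rw [← my_aeval_eq_eval, comp_aeval_apply g (aeval x) p]
  simp only [my_aeval_eq_eval]

variable {d : ℕ}

/-- The value of the `W`-vector under a functional with coordinates `f`. -/
def Wv (hd : 2 ≤ d) (f : Idx d → ℝ) (i : Fin d) : ℝ :=
  if h : (i : ℕ) < d - 1 then f (zI ⟨(i : ℕ) + 1, by omega⟩)
  else ∑ m ∈ Finset.univ.filter (fun m : Fin d => 0 < (m : ℕ)), f (zI m)

/-- The transformed coordinates under `Ad*_{exp X}` where `X` has coordinates `c`. -/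
def Tf (hd : 2 ≤ d) (f c : Idx d → ℝ) : Idx d → ℝ
  | Sum.inl i => f (Sum.inl i)
  | Sum.inr (Sum.inl j) => f (yoI j) - c (xI j) * f (zI ⟨0, by omega⟩)
  | Sum.inr (Sum.inr (Sum.inl j)) => f (yeI j) - c (xI j) * Wv hd f j
  | Sum.inr (Sum.inr (Sum.inr i)) =>
      f (xI i) + c (yoI i) * f (zI ⟨0, by omega⟩) + c (yeI i) * Wv hd f i

section Lie

variable (hd : 2 ≤ d) {L : Type} [LieRing L] [LieAlgebra ℝ L]

theorem map_gdW (B : Idx d → L) (ℓ : Module.Dual ℝ L) (i : Fin d) :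
    ℓ (gdW hd B i) = Wv hd (fun a => ℓ (B a)) i := by
  rw [gdW, Wv, apply_dite ℓ, map_sum]

variable (B : Module.Basis (Idx d) ℝ L)
  (hbr : ∀ a b : Idx d, ⁅B a, B b⁆ = gdBr hd (fun c => B c) a b)

theorem sum_gdBr (ℓ : Module.Dual ℝ L) (c : Idx d → ℝ) (a : Idx d) :
    ∑ b : Idx d, c b * ℓ (gdBr hd (fun x => B x) a b) =
      Sum.elim (fun _ => (0:ℝ))
        (Sum.elim (fun j => -(c (xI j)) * ℓ (B (zI ⟨0, by omega⟩)))
          (Sum.elim (fun j => -(c (xI j)) * Wv hd (coords B ℓ) j)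
            (fun i => c (yoI i) * ℓ (B (zI ⟨0, by omega⟩))
              + c (yeI i) * Wv hd (coords B ℓ) i))) a := by
  have hW : ∀ i, ℓ (gdW hd (fun x => B x) i) = Wv hd (coords B ℓ) i := fun i =>
    map_gdW hd (fun x => B x) ℓ i
  rcases a with i | j | j | i
  · simp only [Sum.elim_inl]
    rw [Fintype.sum_sum_type]
    simp [gdBr]
  · simp only [Sum.elim_inr, Sum.elim_inl]
    rw [Fintype.sum_sum_type]
    simp [gdBr, Fintype.sum_sum_type, apply_ite ℓ, mul_ite, xI]
  · simp only [Sum.elim_inr, Sum.elim_inl]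
    rw [Fintype.sum_sum_type]
    simp [gdBr, Fintype.sum_sum_type, apply_ite ℓ, mul_ite, xI, hW]
  · simp only [Sum.elim_inr]
    rw [Fintype.sum_sum_type]
    simp [gdBr, Fintype.sum_sum_type, apply_ite ℓ, mul_ite, yoI, yeI, hW]

end Lie

section Lie2
variable {d : ℕ} (hd : 2 ≤ d) {L : Type} [LieRing L] [LieAlgebra ℝ L]
variable (B : Module.Basis (Idx d) ℝ L)

theorem my_lie_sum {α : Type*} (y : L) (s : Finset α) (g : α → L) :
    ⁅y, ∑ b ∈ s, g b⁆ = ∑ b ∈ s, ⁅y, g b⁆ := by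
  classical
  induction s using Finset.induction_on with
  | empty => simp
  | insert _ _ h ih => rw [Finset.sum_insert h, Finset.sum_insert h, lie_add, ih]

theorem coords_coad
    (hbr : ∀ a b : Idx d, ⁅B a, B b⁆ = gdBr hd (fun c => B c) a b)
    (X : L) (ℓ : Module.Dual ℝ L) :
    coords B (ℓ + coad X ℓ) = Tf hd (coords B ℓ) (fun b => B.repr X b) := by
  funext a
  have hX : ∑ b : Idx d, B.repr X b • B b = X := B.sum_repr X
  have h2 : ℓ ⁅B a, X⁆ = ∑ b : Idx d, B.repr X b * ℓ (gdBr hd (fun x => B x) a b) := by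
    conv_lhs => rw [← hX]
    rw [my_lie_sum, map_sum]
    refine Finset.sum_congr rfl fun b _ => ?_
    rw [lie_smul, map_smul, smul_eq_mul, hbr]
  have h1 : coords B (ℓ + coad X ℓ) a
      = ℓ (B a) + ∑ b : Idx d, B.repr X b * ℓ (gdBr hd (fun x => B x) a b) := by
    have hc : (coad X ℓ) (B a) = ℓ ⁅B a, X⁆ := rfl
    rw [coords, LinearMap.add_apply, hc, h2]
  rw [h1, sum_gdBr hd B ℓ (fun b => B.repr X b) a]
  rcases a with i | j | j | i
  · simp [Tf, coords]
  · simp [Tf, coords, zI, yoI, xI]; ring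
  · simp [Tf, coords, zI, yeI, xI]; ring
  · simp [Tf, coords, zI, yoI, yeI, xI]; ring

theorem master (hbr : ∀ a b : Idx d, ⁅B a, B b⁆ = gdBr hd (fun c => B c) a b)
    (P : MvPolynomial (Idx d) ℝ)
    (hP : ∀ (X : L) (ℓ : Module.Dual ℝ L),
      eval (coords B (ℓ + coad X ℓ)) P = eval (coords B ℓ) P)
    (f c : Idx d → ℝ) : eval (Tf hd f c) P = eval f P := by
  have h1 : coords B (B.constr ℝ f) = f := funext fun a => B.constr_basis ℝ f a
  have h2 : (fun b => B.repr (B.equivFun.symm c) b) = c := by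
    funext b
    rw [← B.equivFun_apply, B.equivFun.apply_symm_apply]
  have := hP (B.equivFun.symm c) (B.constr ℝ f)
  rwa [coords_coad hd B hbr, h1, h2] at this

end Lie2




variable {d : ℕ}

/-- First index of `Fin d`. -/
def z0 (hd : 2 ≤ d) : Fin d := ⟨0, by omega⟩

/-- The `W`-polynomial. -/
noncomputable def WX (hd : 2 ≤ d) (k : Fin d) : MvPolynomial (Idx d) ℝ := gdW hd (fun a => X a) k

/-- The generators of the algebra of invariants. -/
noncomputable def gen (hd : 2 ≤ d) : Fin d ⊕ Fin d → MvPolynomial (Idx d) ℝ :=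
  Sum.elim (fun i => X (zI i))
    (fun k => X (zI (z0 hd)) * X (yeI k) - WX hd k * X (yoI k))

theorem eval_WX (hd : 2 ≤ d) (f : Idx d → ℝ) (k : Fin d) :
    eval f (WX hd k) = Wv hd f k := by
  rw [WX, gdW, Wv, apply_dite (eval f)]
  split <;> simp

theorem Wv_Tf (hd : 2 ≤ d) (f c : Idx d → ℝ) (k : Fin d) :
    Wv hd (Tf hd f c) k = Wv hd f k := by
  rw [Wv, Wv]
  split <;> rfl

theorem eval_Tf_gen (hd : 2 ≤ d) (f c : Idx d → ℝ) (a : Fin d ⊕ Fin d) :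
    eval (Tf hd f c) (gen hd a) = eval f (gen hd a) := by
  rcases a with i | k
  · simp only [gen, Sum.elim_inl, eval_X]
    rfl
  · simp only [gen, Sum.elim_inr, map_sub, map_mul, eval_X, eval_WX, Wv_Tf]
    have h1 : Tf hd f c (zI (z0 hd)) = f (zI (z0 hd)) := rfl
    have h2 : Tf hd f c (yeI k) = f (yeI k) - c (xI k) * Wv hd f k := rfl
    have h3 : Tf hd f c (yoI k) = f (yoI k) - c (xI k) * f (zI (z0 hd)) := rfl
    rw [h1, h2, h3]
    ring

theorem set_eq (hd : 2 ≤ d) :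
    {Q : MvPolynomial (Idx d) ℝ |
        (∃ i : Fin d, Q = MvPolynomial.X (zI i)) ∨
        (∃ k : Fin d, ∃ hk : (k : ℕ) < d - 1,
          Q = MvPolynomial.X (zI ⟨0, by linarith⟩) * MvPolynomial.X (yeI k)
              - MvPolynomial.X (zI ⟨(k : ℕ) + 1, Nat.add_lt_of_lt_sub hk⟩) * MvPolynomial.X (yoI k)) ∨
        Q = MvPolynomial.X (zI ⟨0, by linarith⟩) * MvPolynomial.X (yeI ⟨d - 1, Nat.sub_lt (by linarith) Nat.one_pos⟩)
            - (∑ m ∈ Finset.univ.filter (fun m : Fin d => 0 < (m : ℕ)),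
                MvPolynomial.X (zI m))
              * MvPolynomial.X (yoI ⟨d - 1, Nat.sub_lt (by linarith) Nat.one_pos⟩)}
      = Set.range (gen hd) := by
  ext Q
  simp only [Set.mem_setOf_eq, Set.mem_range]
  constructor
  · rintro (⟨i, rfl⟩ | ⟨k, hk, rfl⟩ | rfl)
    · exact ⟨Sum.inl i, rfl⟩
    · refine ⟨Sum.inr k, ?_⟩
      simp only [gen, Sum.elim_inr, WX, gdW, dif_pos hk]
      rfl
    · refine ⟨Sum.inr ⟨d - 1, by omega⟩, ?_⟩
      have hk : ¬ ((⟨d - 1, by omega⟩ : Fin d) : ℕ) < d - 1 := by simp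
      simp only [gen, Sum.elim_inr, WX, gdW, dif_neg hk]
      rfl
  · rintro ⟨a, rfl⟩
    rcases a with i | k
    · exact Or.inl ⟨i, rfl⟩
    · by_cases hk : (k : ℕ) < d - 1
      · refine Or.inr (Or.inl ⟨k, hk, ?_⟩)
        simp only [gen, Sum.elim_inr, WX, gdW, dif_pos hk]
        rfl
      · refine Or.inr (Or.inr ?_)
        have hkd : k = ⟨d - 1, by omega⟩ := by
          have h1 := k.isLt
          have h2 : (k : ℕ) = d - 1 := by omega
          exact Fin.ext (by simpa using h2)
        rw [hkd] at hk ⊢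
        simp only [gen, Sum.elim_inr, WX, gdW, dif_neg hk]
        rfl

theorem backward_eval (hd : 2 ≤ d) (P : MvPolynomial (Idx d) ℝ)
    (hP : ∃ Φ : MvPolynomial (Fin d ⊕ Fin d) ℝ, P = aeval (gen hd) Φ)
    (f c : Idx d → ℝ) : eval (Tf hd f c) P = eval f P := by
  obtain ⟨Φ, rfl⟩ := hP
  have h : (fun i => eval (Tf hd f c) (gen hd i)) = fun i => eval f (gen hd i) :=
    funext (eval_Tf_gen hd f c)
  rw [my_eval_aeval, my_eval_aeval, h]


/-- The values of the invariant generators `ζ_k`. -/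
noncomputable def zeta (hd : 2 ≤ d) (f : Idx d → ℝ) (k : Fin d) : ℝ :=
  f (zI (z0 hd)) * f (yeI k) - Wv hd f k * f (yoI k)

theorem eval_gen_inl (hd : 2 ≤ d) (f : Idx d → ℝ) (i : Fin d) :
    eval f (gen hd (Sum.inl i)) = f (zI i) := by simp [gen]

theorem eval_gen_inr (hd : 2 ≤ d) (f : Idx d → ℝ) (k : Fin d) :
    eval f (gen hd (Sum.inr k)) = zeta hd f k := by
  simp [gen, eval_WX, zeta]

/-- Normal form of a point with `z_1 ≠ 0` under the coadjoint action. -/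
noncomputable def g0 (hd : 2 ≤ d) (f : Idx d → ℝ) : Idx d → ℝ :=
  Sum.elim (fun i => f (zI i)) (Sum.elim (fun _ => 0)
    (Sum.elim (fun k => zeta hd f k / f (zI (z0 hd))) (fun _ => 0)))

/-- The coefficients used to move a point to its normal form. -/
noncomputable def c0 (hd : 2 ≤ d) (f : Idx d → ℝ) : Idx d → ℝ :=
  Sum.elim (fun _ => 0) (Sum.elim (fun i => -(f (xI i)) / f (zI (z0 hd)))
    (Sum.elim (fun _ => 0) (fun j => f (yoI j) / f (zI (z0 hd)))))

theorem Tf_c0 (hd : 2 ≤ d) (f : Idx d → ℝ) (h0 : f (zI (z0 hd)) ≠ 0) :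
    Tf hd f (c0 hd f) = g0 hd f := by
  funext a
  rcases a with i | j | j | i
  · rfl
  · show f (yoI j) - c0 hd f (xI j) * f (zI (z0 hd)) = g0 hd f (Sum.inr (Sum.inl j))
    show f (yoI j) - f (yoI j) / f (zI (z0 hd)) * f (zI (z0 hd)) = 0
    field_simp
    ring
  · show f (yeI j) - c0 hd f (xI j) * Wv hd f j = g0 hd f (Sum.inr (Sum.inr (Sum.inl j)))
    show f (yeI j) - f (yoI j) / f (zI (z0 hd)) * Wv hd f j = zeta hd f j / f (zI (z0 hd))
    rw [zeta]
    field_simp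
  · show f (xI i) + c0 hd f (yoI i) * f (zI (z0 hd)) + c0 hd f (yeI i) * Wv hd f i
        = g0 hd f (Sum.inr (Sum.inr (Sum.inr i)))
    show f (xI i) + -(f (xI i)) / f (zI (z0 hd)) * f (zI (z0 hd)) + 0 * Wv hd f i = 0
    field_simp
    ring

theorem key (hd : 2 ≤ d) (P : MvPolynomial (Idx d) ℝ)
    (hm : ∀ f c, eval (Tf hd f c) P = eval f P)
    (f : Idx d → ℝ) (h0 : f (zI (z0 hd)) ≠ 0) :
    eval f P = eval (g0 hd f) P := by
  rw [← hm f (c0 hd f), Tf_c0 hd f h0]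

theorem exists_pow_eq (hd : 2 ≤ d) (P : MvPolynomial (Idx d) ℝ)
    (hm : ∀ f c, eval (Tf hd f c) P = eval f P) :
    ∃ (N : ℕ) (Φ : MvPolynomial (Fin d ⊕ Fin d) ℝ),
      X (zI (z0 hd)) ^ N * P = aeval (gen hd) Φ := by
  classical
  set ρ : Idx d → MvPolynomial (Fin d ⊕ Fin d) ℝ :=
    Sum.elim (fun i => X (Sum.inl i)) (Sum.elim (fun _ => 0)
      (Sum.elim (fun k => X (Sum.inr k)) (fun _ => 0))) with hρ
  set G : MvPolynomial (Fin d ⊕ Fin d) ℝ := aeval ρ P with hG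
  set N := G.totalDegree with hN
  refine ⟨N, ∑ m ∈ G.support, (MvPolynomial.C (coeff m G)
      * ((∏ i : Fin d, X (Sum.inl i) ^ m (Sum.inl i))
        * (∏ k : Fin d, X (Sum.inr k) ^ m (Sum.inr k))
        * X (Sum.inl (z0 hd)) ^ (N - ∑ k : Fin d, m (Sum.inr k)))), ?_⟩
  set Φ : MvPolynomial (Fin d ⊕ Fin d) ℝ := ∑ m ∈ G.support, (MvPolynomial.C (coeff m G)
      * ((∏ i : Fin d, X (Sum.inl i) ^ m (Sum.inl i))
        * (∏ k : Fin d, X (Sum.inr k) ^ m (Sum.inr k))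
        * X (Sum.inl (z0 hd)) ^ (N - ∑ k : Fin d, m (Sum.inr k)))) with hΦ
  have main : ∀ f : Idx d → ℝ, f (zI (z0 hd)) ≠ 0 →
      f (zI (z0 hd)) ^ N * eval f P = eval f (aeval (gen hd) Φ) := by
    intro f h0
    set vf : Fin d ⊕ Fin d → ℝ :=
      Sum.elim (fun i => f (zI i)) (fun k => zeta hd f k / f (zI (z0 hd))) with hvf
    have heq : (fun a => eval vf (ρ a)) = g0 hd f := by
      funext a
      rcases a with i | j | j | i <;> simp [hρ, g0, hvf]
    have hkey : eval f P = eval vf G := by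
      rw [hG, my_eval_aeval, heq]
      exact key hd P hm f h0
    rw [hkey]
    have hgen : (fun a => eval f (gen hd a))
        = Sum.elim (fun i => f (zI i)) (fun k => zeta hd f k) := by
      funext a
      rcases a with i | k
      · rw [eval_gen_inl]; rfl
      · rw [eval_gen_inr]; rfl
    conv_rhs => rw [my_eval_aeval]
    rw [hgen, eval_eq' vf G, Finset.mul_sum, map_sum]
    refine Finset.sum_congr rfl fun m hmm => ?_
    have hle : (∑ k : Fin d, m (Sum.inr k)) ≤ N := by
      have h1 : (m.sum fun _ e => e) ≤ N := le_totalDegree hmm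
      have h2 : (m.sum fun _ e => e) = ∑ a : Fin d ⊕ Fin d, m a := by
        rw [Finsupp.sum]
        exact Finset.sum_subset (Finset.subset_univ _)
          (fun x _ hx => Finsupp.notMem_support_iff.mp hx)
      rw [h2, Fintype.sum_sum_type] at h1
      omega
    simp only [map_mul, map_pow, map_prod, eval_C, eval_X, Sum.elim_inl, Sum.elim_inr]
    rw [Fintype.prod_sum_type]
    have hsplit : (∏ k : Fin d, (zeta hd f k / f (zI (z0 hd))) ^ m (Sum.inr k))
        = (∏ k : Fin d, zeta hd f k ^ m (Sum.inr k))
          / f (zI (z0 hd)) ^ (∑ k : Fin d, m (Sum.inr k)) := by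
      simp only [div_pow]
      rw [Finset.prod_div_distrib, Finset.prod_pow_eq_pow_sum]
    have hpow : f (zI (z0 hd)) ^ N
        = f (zI (z0 hd)) ^ (N - ∑ k : Fin d, m (Sum.inr k))
          * f (zI (z0 hd)) ^ (∑ k : Fin d, m (Sum.inr k)) := by
      rw [← pow_add, Nat.sub_add_cancel hle]
    have hzS : f (zI (z0 hd)) ^ (∑ k : Fin d, m (Sum.inr k)) ≠ 0 := pow_ne_zero _ h0
    simp only [hvf, Sum.elim_inl, Sum.elim_inr]
    rw [hsplit, hpow]
    field_simp
  have hfun : X (zI (z0 hd)) * (X (zI (z0 hd)) ^ N * P)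
      = X (zI (z0 hd)) * aeval (gen hd) Φ := by
    apply MvPolynomial.funext
    intro f
    by_cases h0 : f (zI (z0 hd)) = 0
    · simp [h0]
    · simp only [map_mul, map_pow, eval_X]
      rw [← main f h0]
  exact mul_left_cancel₀ (MvPolynomial.X_ne_zero _) hfun
/-- Substitution sending `X (inl z0)` to `0`, on `Fin d ⊕ Fin d`. -/
noncomputable def upd (hd : 2 ≤ d) : Fin d ⊕ Fin d → MvPolynomial (Fin d ⊕ Fin d) ℝ :=
  Sum.elim (fun i => if i = z0 hd then 0 else X (Sum.inl i)) (fun k => X (Sum.inr k))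

theorem lemA (hd : 2 ≤ d) (Q : MvPolynomial (Fin d ⊕ Fin d) ℝ) :
    ∃ Ψ, Q = aeval (upd hd) Q + X (Sum.inl (z0 hd)) * Ψ := by
  induction Q using MvPolynomial.induction_on with
  | C a => exact ⟨0, by simp⟩
  | add p q hp hq =>
      obtain ⟨Ψp, hp⟩ := hp; obtain ⟨Ψq, hq⟩ := hq
      refine ⟨Ψp + Ψq, ?_⟩
      rw [map_add]
      calc p + q = (aeval (upd hd) p + X (Sum.inl (z0 hd)) * Ψp)
            + (aeval (upd hd) q + X (Sum.inl (z0 hd)) * Ψq) := by rw [← hp, ← hq]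
        _ = _ := by ring
  | mul_X p n hp =>
      obtain ⟨Ψ, hΨ⟩ := hp
      by_cases hn : n = Sum.inl (z0 hd)
      · subst hn
        refine ⟨p, ?_⟩
        rw [map_mul, aeval_X]
        have hz : upd hd (Sum.inl (z0 hd)) = 0 := by simp [upd]
        rw [hz, mul_zero, zero_add, mul_comm]
      · refine ⟨Ψ * X n, ?_⟩
        rw [map_mul, aeval_X]
        have hu : upd hd n = X n := by
          rcases n with i | k
          · simp only [upd, Sum.elim_inl]
            rw [if_neg]
            intro h; exact hn (by rw [h])
          · rfl
        rw [hu]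
        calc p * X n = (aeval (upd hd) p + X (Sum.inl (z0 hd)) * Ψ) * X n := by rw [← hΨ]
          _ = _ := by ring

theorem upd_idem (hd : 2 ≤ d) (Q : MvPolynomial (Fin d ⊕ Fin d) ℝ) :
    aeval (upd hd) (aeval (upd hd) Q) = aeval (upd hd) Q := by
  rw [comp_aeval_apply]
  have h : (fun i => aeval (upd hd) (upd hd i)) = upd hd := by
    funext a
    rcases a with i | k
    · by_cases h : i = z0 hd <;> simp [upd, h]
    · simp [upd]
  rw [h]

/-- Image of the generators after setting `z_1 = 0`. -/
noncomputable def gen0 (hd : 2 ≤ d) : Fin d ⊕ Fin d → MvPolynomial (Idx d) ℝ :=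
  Sum.elim (fun i => if i = z0 hd then 0 else X (zI i)) (fun k => -(WX hd k * X (yoI k)))

/-- Substitution on `Idx d` sending `X (zI z0)` to `0`. -/
noncomputable def psub (hd : 2 ≤ d) : Idx d → MvPolynomial (Idx d) ℝ :=
  fun a => if a = zI (z0 hd) then 0 else X a

theorem psub_WX (hd : 2 ≤ d) (k : Fin d) : aeval (psub hd) (WX hd k) = WX hd k := by
  rw [WX, gdW, apply_dite (aeval (psub hd))]
  split
  · rw [aeval_X, psub, if_neg (by simp [zI, z0, Fin.ext_iff])]
  · rw [map_sum]
    refine Finset.sum_congr rfl fun m hm => ?_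
    rw [aeval_X, psub, if_neg]
    simp only [Finset.mem_filter] at hm
    simp [zI, z0, Fin.ext_iff]
    omega

theorem psub_gen (hd : 2 ≤ d) (a : Fin d ⊕ Fin d) :
    aeval (psub hd) (gen hd a) = gen0 hd a := by
  rcases a with i | k
  · simp only [gen, Sum.elim_inl, aeval_X, psub, gen0]
    have hcond : (zI i = zI (z0 hd)) ↔ i = z0 hd := by simp [zI]
    by_cases h : i = z0 hd
    · rw [if_pos (hcond.mpr h), if_pos h]
    · rw [if_neg (fun hh => h (hcond.mp hh)), if_neg h]
  · simp only [gen, Sum.elim_inr, map_sub, map_mul, aeval_X, psub_WX, gen0]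
    have h1 : psub hd (zI (z0 hd)) = 0 := if_pos rfl
    have h2 : psub hd (yeI k) = X (yeI k) := if_neg (by simp [yeI, zI])
    have h3 : psub hd (yoI k) = X (yoI k) := if_neg (by simp [yoI, zI])
    rw [h1, h2, h3]
    ring

/-- The `W`-polynomial in the abstract variables. -/
noncomputable def Wz (hd : 2 ≤ d) (k : Fin d) : MvPolynomial (Fin d ⊕ Fin d) ℝ :=
  if h : (k : ℕ) < d - 1 then X (Sum.inl ⟨(k : ℕ) + 1, by omega⟩)
  else ∑ m ∈ Finset.univ.filter (fun m : Fin d => 0 < (m : ℕ)), X (Sum.inl m)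

theorem Wz_ne (hd : 2 ≤ d) (k : Fin d) : Wz hd k ≠ 0 := by
  rw [Wz]
  split
  · exact MvPolynomial.X_ne_zero _
  · intro h
    have h1 := congrArg (eval (fun _ => (1:ℝ))) h
    simp only [map_sum, eval_X, map_zero, Finset.sum_const, nsmul_eq_mul, mul_one] at h1
    have h2 : (⟨1, by omega⟩ : Fin d) ∈ Finset.univ.filter (fun m : Fin d => 0 < (m : ℕ)) := by
      simp
    have h3 : 0 < (Finset.univ.filter (fun m : Fin d => 0 < (m : ℕ))).card :=
      Finset.card_pos.mpr ⟨_, h2⟩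
    norm_cast at h1
    omega

theorem lemB (hd : 2 ≤ d) (Q : MvPolynomial (Fin d ⊕ Fin d) ℝ)
    (hQ : aeval (upd hd) Q = Q) (h0 : aeval (gen0 hd) Q = 0) : Q = 0 := by
  by_contra hne
  have hprod : Q * ∏ k : Fin d, Wz hd k ≠ 0 :=
    mul_ne_zero hne (Finset.prod_ne_zero_iff.mpr fun k _ => Wz_ne hd k)
  obtain ⟨v, hv⟩ : ∃ v, eval v (Q * ∏ k : Fin d, Wz hd k) ≠ 0 := by
    by_contra hc
    push_neg at hc
    exact hprod (MvPolynomial.funext fun x => by simp [hc x])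
  rw [map_mul, map_prod] at hv
  have hvQ : eval v Q ≠ 0 := left_ne_zero_of_mul hv
  have hvW : ∀ k : Fin d, eval v (Wz hd k) ≠ 0 := by
    intro k hk
    exact right_ne_zero_of_mul hv (Finset.prod_eq_zero (Finset.mem_univ k) hk)
  set v' := Function.update v (Sum.inl (z0 hd)) (0:ℝ) with hv'def
  have hWz_v' : ∀ k, eval v' (Wz hd k) = eval v (Wz hd k) := by
    intro k
    rw [Wz]
    split
    · rw [eval_X, eval_X]
      apply Function.update_of_ne
      simp only [ne_eq, Sum.inl.injEq, z0, Fin.ext_iff]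
      omega
    · rw [map_sum, map_sum]
      refine Finset.sum_congr rfl fun m hm => ?_
      rw [eval_X, eval_X]
      apply Function.update_of_ne
      simp only [Finset.mem_filter] at hm
      simp only [ne_eq, Sum.inl.injEq, z0, Fin.ext_iff]
      omega
  have hupd : (fun a => eval v (upd hd a)) = v' := by
    funext a
    rcases a with i | k
    · by_cases h : i = z0 hd
      · subst h
        simp [upd, hv'def]
      · simp only [upd, Sum.elim_inl, if_neg h, eval_X, hv'def]
        rw [Function.update_of_ne]
        simp only [ne_eq, Sum.inl.injEq]
        exact h
    · simp only [upd, Sum.elim_inr, eval_X, hv'def]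
      rw [Function.update_of_ne]
      simp
  have hv'Q : eval v' Q = eval v Q := by
    have h2 : eval v (aeval (upd hd) Q) = eval v' Q := by rw [my_eval_aeval, hupd]
    rw [← h2, hQ]
  set f : Idx d → ℝ := Sum.elim (fun i => v' (Sum.inl i))
    (Sum.elim (fun k => -(v' (Sum.inr k)) / eval v' (Wz hd k))
      (Sum.elim (fun _ => 0) (fun _ => 0))) with hfdef
  have hWvf : ∀ k, Wv hd f k = eval v' (Wz hd k) := by
    intro k
    rw [Wv, Wz]
    split
    · rw [eval_X]; rfl
    · rw [map_sum]
      refine Finset.sum_congr rfl fun m hm => ?_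
      rw [eval_X]; rfl
  have hpoint : (fun a => eval f (gen0 hd a)) = v' := by
    funext a
    rcases a with i | k
    · by_cases h : i = z0 hd
      · subst h
        simp [gen0, hv'def]
      · simp only [gen0, Sum.elim_inl, if_neg h, eval_X]
        rfl
    · simp only [gen0, Sum.elim_inr, map_neg, map_mul, eval_X, eval_WX]
      rw [hWvf]
      have hfk : f (yoI k) = -(v' (Sum.inr k)) / eval v' (Wz hd k) := rfl
      rw [hfk]
      have hWne : eval v' (Wz hd k) ≠ 0 := by rw [hWz_v' k]; exact hvW k
      field_simp
  have hQ0 : eval v' Q = 0 := by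
    have h4 := congrArg (eval f) h0
    rw [my_eval_aeval, hpoint] at h4
    simpa using h4
  rw [hv'Q] at hQ0
  exact hvQ hQ0

theorem div_lemma (hd : 2 ≤ d) :
    ∀ (N : ℕ) (P' : MvPolynomial (Idx d) ℝ),
    (∃ Φ : MvPolynomial (Fin d ⊕ Fin d) ℝ, X (zI (z0 hd)) ^ N * P' = aeval (gen hd) Φ) →
    ∃ Φ : MvPolynomial (Fin d ⊕ Fin d) ℝ, P' = aeval (gen hd) Φ := by
  intro N
  induction N with
  | zero =>
      rintro P' ⟨Φ, h⟩
      exact ⟨Φ, by rw [← h, pow_zero, one_mul]⟩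
  | succ n ih =>
      rintro P' ⟨Φ, hΦ⟩
      obtain ⟨Ψ, hΨ⟩ := lemA hd Φ
      have hg0 : aeval (gen0 hd) Φ = 0 := by
        have h1 := congrArg (aeval (psub hd)) hΦ
        rw [map_mul, map_pow, aeval_X] at h1
        have h2 : psub hd (zI (z0 hd)) = 0 := if_pos rfl
        rw [h2, comp_aeval_apply (gen hd) (aeval (psub hd)) Φ] at h1
        have h3 : (fun i => aeval (psub hd) (gen hd i)) = gen0 hd := funext (psub_gen hd)
        rw [h3] at h1
        rw [← h1]
        simp [pow_succ]
      have hΦ0 : aeval (upd hd) Φ = 0 := by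
        apply lemB hd _ (upd_idem hd Φ)
        have h4 := congrArg (aeval (gen0 hd)) hΨ
        rw [map_add, map_mul, aeval_X] at h4
        have h5 : gen0 hd (Sum.inl (z0 hd)) = 0 := by simp [gen0]
        rw [h5, hg0] at h4
        simpa using h4.symm
      rw [hΦ0, zero_add] at hΨ
      rw [hΨ, map_mul, aeval_X] at hΦ
      have h6 : gen hd (Sum.inl (z0 hd)) = X (zI (z0 hd)) := rfl
      rw [h6] at hΦ
      have h7 : X (zI (z0 hd)) * (X (zI (z0 hd)) ^ n * P')
          = X (zI (z0 hd)) * aeval (gen hd) Ψ := by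
        rw [← hΦ]; ring
      exact ih P' ⟨Ψ, mul_left_cancel₀ (MvPolynomial.X_ne_zero _) h7⟩
end InvAux

theorem invariant_polynomials_gd (d : ℕ) (hd : 2 ≤ d) (L : Type) [LieRing L]
    [LieAlgebra ℝ L] (B : Module.Basis (Idx d) ℝ L)
    (hbr : ∀ a b : Idx d, ⁅B a, B b⁆ = gdBr hd (fun c => B c) a b)
    (P : MvPolynomial (Idx d) ℝ) :
    (∀ (X : L) (ℓ : Module.Dual ℝ L),
        MvPolynomial.eval (coords B (ℓ + coad X ℓ)) P = MvPolynomial.eval (coords B ℓ) P)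
      ↔ P ∈ Algebra.adjoin ℝ
          {Q : MvPolynomial (Idx d) ℝ |
            (∃ i : Fin d, Q = MvPolynomial.X (zI i)) ∨
            (∃ k : Fin d, ∃ hk : (k : ℕ) < d - 1,
              Q = MvPolynomial.X (zI ⟨0, by omega⟩) * MvPolynomial.X (yeI k)
                  - MvPolynomial.X (zI ⟨(k : ℕ) + 1, by omega⟩) * MvPolynomial.X (yoI k)) ∨
            Q = MvPolynomial.X (zI ⟨0, by omega⟩) * MvPolynomial.X (yeI ⟨d - 1, by omega⟩)
                - (∑ m ∈ Finset.univ.filter (fun m : Fin d => 0 < (m : ℕ)),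
                    MvPolynomial.X (zI m))
                  * MvPolynomial.X (yoI ⟨d - 1, by omega⟩)} := by
  rw [InvAux.set_eq hd, Algebra.adjoin_range_eq_range_aeval]
  constructor
  · intro hP
    have hm := InvAux.master hd B hbr P hP
    obtain ⟨N, Φ, hNE⟩ := InvAux.exists_pow_eq hd P hm
    obtain ⟨Φ', hΦ'⟩ := InvAux.div_lemma hd N P ⟨Φ, hNE⟩
    exact (AlgHom.mem_range (MvPolynomial.aeval (InvAux.gen hd))).mpr ⟨Φ', hΦ'.symm⟩
  · intro hP X ℓ
    obtain ⟨Φ, hΦ⟩ := (AlgHom.mem_range (MvPolynomial.aeval (InvAux.gen hd))).mp hP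
    rw [InvAux.coords_coad hd B hbr]
    exact InvAux.backward_eval hd P ⟨Φ, hΦ.symm⟩ _ _
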